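/- Let d be a positive squarefree integer, let r, s, u, v be integers with d = r·s and s·u − r·v = 1, and let m, c be integers. Set g = gcd(m,d). Then the greatest common divisor of the three integers (d/g)·(s + 2·m·v + c·r·v²), (m/g)·(r·v + s·u) + (d/g)·(1 + c·u·v), and (d/g)·(c·s·u² + 2·m·u + r) equals 1. -/

import Mathlib

/-- Field computation for odd primes. -/
lemma aux_odd {K : Type*} [Field K] (h2 : (2 : K) ≠ 0)
    (r s u v c m g d' m' d : K)
    (h1 : s * u - r * v = 1) (hd : d = r * s) (hdd : d = g * d') (hmm : m = g * m')
    (hA : s + 2 * m * v + c * r * v ^ 2 = 0)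
    (hB : m' * (r * v + s * u) + d' * (1 + c * u * v) = 0)
    (hC : c * s * u ^ 2 + 2 * m * u + r = 0)
    (hd' : d' ≠ 0) : False := by
  have hcuv : c * u * v = 1 := by
    linear_combination v * hC - u * hA - (c * u * v - 1) * h1
  have hct : c * (s * u + r * v) + 2 * m = 0 := by
    linear_combination s * hC - r * hA - (c * (s * u + r * v) + 2 * m) * h1
  have hmt : m' * (s * u + r * v) + 2 * d' = 0 := by
    linear_combination hB - d' * hcuv
  have hc0 : c ≠ 0 := by
    intro h
    rw [h] at hcuv
    simp at hcuv
  have h2' : 2 * (c * d' - m * m') = 0 := by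
    linear_combination c * hmt - m' * hct
  have hmm' : m * m' = c * d' := by
    rcases mul_eq_zero.mp h2' with h | h
    · exact absurd h h2
    · linear_combination -h
  have hm2 : m ^ 2 = c * d := by
    linear_combination m * hmm + g * hmm' - c * hdd
  have ht2 : (c * (s * u + r * v)) ^ 2 = 4 * m ^ 2 := by
    linear_combination (c * (s * u + r * v) - 2 * m) * hct
  have h5 : (c * (s * u + r * v)) ^ 2 = c ^ 2 * (1 + 4 * u * v * d) := by
    linear_combination c ^ 2 * (s * u - r * v + 1) * h1 - 4 * c ^ 2 * u * v * hd
  have h6 : c ^ 2 * (1 + 4 * u * v * d) = c ^ 2 + 4 * c * d := by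
    linear_combination 4 * c * d * hcuv
  have hc2 : c ^ 2 = 0 := by
    linear_combination ht2 - h5 - h6 + 4 * hm2
  exact hc0 (pow_eq_zero_iff (by norm_num) |>.mp hc2)

/-- The p = 2 case, by exhaustive check. -/
lemma aux_two : ∀ r s u v c m : ZMod 2,
    s * u - r * v = 1 →
    s + 2 * m * v + c * r * v ^ 2 = 0 →
    c * u * v = 1 → False := by decide

/-- With `d = r·s` squarefree, `s·u - r·v = 1`, `g = gcd(m,d)`, the three integers
`(d/g)(s + 2mv + crv²)`, `(m/g)(rv + su) + (d/g)(1 + cuv)`, `(d/g)(csu² + 2mu + r)`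
are coprime. -/
theorem gcd_three_eq_one (d : ℤ) (hd : 0 < d) (hsq : Squarefree d)
    (r s u v m c : ℤ) (hrs : d = r * s) (huv : s * u - r * v = 1) :
    Int.gcd
      (Int.gcd ((d / (Int.gcd m d : ℤ)) * (s + 2 * m * v + c * r * v ^ 2))
        ((m / (Int.gcd m d : ℤ)) * (r * v + s * u) +
          (d / (Int.gcd m d : ℤ)) * (1 + c * u * v)))
      ((d / (Int.gcd m d : ℤ)) * (c * s * u ^ 2 + 2 * m * u + r)) = 1 := by
  set g : ℤ := (Int.gcd m d : ℤ) with hg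
  set d' : ℤ := d / g with hd'def
  set m' : ℤ := m / g with hm'def
  have hd0 : d ≠ 0 := hd.ne'
  have hgd : g ∣ d := Int.gcd_dvd_right m d
  have hgm : g ∣ m := Int.gcd_dvd_left m d
  have hgpos : 0 < Int.gcd m d := Int.gcd_pos_of_ne_zero_right m hd0
  have hdd : d = g * d' := (Int.mul_ediv_cancel' hgd).symm
  have hmm : m = g * m' := (Int.mul_ediv_cancel' hgm).symm
  have hcop : Int.gcd m' d' = 1 := Int.gcd_div_gcd_div_gcd hgpos
  by_contra hne
  obtain ⟨p, hp, hpdvd⟩ := Nat.exists_prime_and_dvd hne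
  have hpprime : Prime (p : ℤ) := Nat.prime_iff_prime_int.mp hp
  -- p divides each of the three integers
  have hp0 : (p : ℤ) ∣ _ := Int.natCast_dvd_natCast.mpr hpdvd
  have hA : (p : ℤ) ∣ d' * (s + 2 * m * v + c * r * v ^ 2) :=
    (hp0.trans (Int.gcd_dvd_left _ _)).trans (Int.gcd_dvd_left _ _)
  have hB : (p : ℤ) ∣ m' * (r * v + s * u) + d' * (1 + c * u * v) :=
    (hp0.trans (Int.gcd_dvd_left _ _)).trans (Int.gcd_dvd_right _ _)
  have hC : (p : ℤ) ∣ d' * (c * s * u ^ 2 + 2 * m * u + r) :=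
    hp0.trans (Int.gcd_dvd_right _ _)
  by_cases hpd' : (p : ℤ) ∣ d'
  · -- case p ∣ d'
    have hnm' : ¬ (p : ℤ) ∣ m' := by
      intro h
      have : (p : ℤ) ∣ (Int.gcd m' d' : ℤ) := by have := Int.dvd_gcd h hpd'; exact_mod_cast this
      rw [hcop] at this
      exact hpprime.not_unit (isUnit_of_dvd_one (by exact_mod_cast this))
    have h1 : (p : ℤ) ∣ m' * (r * v + s * u) := by
      have heq : m' * (r * v + s * u) =
          (m' * (r * v + s * u) + d' * (1 + c * u * v)) - d' * (1 + c * u * v) := by ring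
      rw [heq]
      exact dvd_sub hB (hpd'.mul_right _)
    have hpt : (p : ℤ) ∣ r * v + s * u := (hpprime.dvd_mul.mp h1).resolve_left hnm'
    have hpdvd_d : (p : ℤ) ∣ d := hdd ▸ (hpd'.mul_left g)
    have hprs : (p : ℤ) ∣ r * s := hrs ▸ hpdvd_d
    have hnotboth : ¬ ((p : ℤ) ∣ r ∧ (p : ℤ) ∣ s) := by
      rintro ⟨h1, h2⟩
      exact hpprime.not_unit (hsq (p : ℤ) (by rw [hrs]; exact mul_dvd_mul h1 h2))
    rcases hpprime.dvd_mul.mp hprs with hpr | hps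
    · have hsu : (p : ℤ) ∣ s * u := by
        have heq : s * u = (r * v + s * u) - r * v := by ring
        rw [heq]; exact dvd_sub hpt (hpr.mul_right v)
      rcases hpprime.dvd_mul.mp hsu with hps | hpu
      · exact hnotboth ⟨hpr, hps⟩
      · have : (p : ℤ) ∣ 1 := huv ▸ dvd_sub ((hpu.mul_left s)) (hpr.mul_right v)
        exact hpprime.not_unit (isUnit_of_dvd_one this)
    · have hrv : (p : ℤ) ∣ r * v := by
        have heq : r * v = (r * v + s * u) - s * u := by ring
        rw [heq]; exact dvd_sub hpt (hps.mul_right u)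
      rcases hpprime.dvd_mul.mp hrv with hpr | hpv
      · exact hnotboth ⟨hpr, hps⟩
      · have : (p : ℤ) ∣ 1 := huv ▸ dvd_sub (hps.mul_right u) (hpv.mul_left r)
        exact hpprime.not_unit (isUnit_of_dvd_one this)
  · -- case p ∤ d' : work in ZMod p
    haveI : Fact p.Prime := ⟨hp⟩
    have hd'0 : ((d' : ℤ) : ZMod p) ≠ 0 := by
      rw [Ne, ZMod.intCast_zmod_eq_zero_iff_dvd]
      exact hpd'
    have hA0 : ((s : ZMod p) + 2 * m * v + c * r * v ^ 2) = 0 := by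
      have := (ZMod.intCast_zmod_eq_zero_iff_dvd _ p).mpr hA
      push_cast at this
      rcases mul_eq_zero.mp this with h | h
      · exact absurd h hd'0
      · exact h
    have hC0 : ((c : ZMod p) * s * u ^ 2 + 2 * m * u + r) = 0 := by
      have := (ZMod.intCast_zmod_eq_zero_iff_dvd _ p).mpr hC
      push_cast at this
      rcases mul_eq_zero.mp this with h | h
      · exact absurd h hd'0
      · exact h
    have hB0 : ((m' : ZMod p) * (r * v + s * u) + d' * (1 + c * u * v)) = 0 := by
      have := (ZMod.intCast_zmod_eq_zero_iff_dvd _ p).mpr hB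
      push_cast at this
      exact this
    have h1z : (s : ZMod p) * u - r * v = 1 := by
      have : ((s * u - r * v : ℤ) : ZMod p) = ((1 : ℤ) : ZMod p) := by rw [huv]
      push_cast at this
      exact this
    have hdz : (d : ZMod p) = r * s := by exact_mod_cast congrArg (Int.cast : ℤ → ZMod p) hrs
    have hddz : (d : ZMod p) = g * d' := by exact_mod_cast congrArg (Int.cast : ℤ → ZMod p) hdd
    have hmmz : (m : ZMod p) = g * m' := by exact_mod_cast congrArg (Int.cast : ℤ → ZMod p) hmm
    by_cases hp2 : p = 2
    · subst hp2
      have hcuv : (c : ZMod 2) * u * v = 1 := by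
        linear_combination v * hC0 - u * hA0 - ((c : ZMod 2) * u * v - 1) * h1z
      exact aux_two r s u v c m h1z hA0 hcuv
    · have h2ne : (2 : ZMod p) ≠ 0 := by
        have hnd : ¬ (p ∣ 2) := fun h => hp2 ((Nat.prime_dvd_prime_iff_eq hp Nat.prime_two).mp h)
        have : ((2 : ℕ) : ZMod p) ≠ 0 := by
          rw [Ne, ZMod.natCast_eq_zero_iff]
          exact hnd
        simpa using this
      exact aux_odd h2ne r s u v c m g d' m' d h1z hdz hddz hmmz hA0 hB0 hC0 hd'0
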